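/- Let E : 𝓗 → ℝ be continuously differentiable and let P* ∈ 𝓜_N be a local minimizer of E over 𝓜_N. Then, with H* = ∇E(P*), one has P*H*(1−P*) = (1−P*)H*P* = 0; equivalently, [H*, P*] = 0. -/

import Mathlib

open Matrix Filter Topology
open scoped BigOperators

attribute [local instance] Matrix.normedAddCommGroup Matrix.normedSpace

noncomputable section

/-- Square real matrices of size `n`. -/
abbrev Mat (n : ℕ) := Matrix (Fin n) (Fin n) ℝ

/-- Frobenius inner product `⟨A, B⟩ = Tr(AᵀB)`. -/
def frobInner {n : ℕ} (A B : Mat n) : ℝ := (Aᵀ * B).trace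

/-- Frobenius norm. -/
def frobNorm {n : ℕ} (A : Mat n) : ℝ := Real.sqrt ((Aᵀ * A).trace)

/-- The manifold `𝓜_N` of rank-`N` symmetric orthogonal projectors. -/
def projSet (n N : ℕ) : Set (Mat n) := {P | P.IsSymm ∧ P * P = P ∧ P.trace = (N : ℝ)}

/-- The tangent space `T_P 𝓜_N`. -/
def tangentSet {n : ℕ} (P : Mat n) : Set (Mat n) :=
  {X | X.IsSymm ∧ P * X + X * P = X ∧ X.trace = 0}

/-- The projection `Π_P(X) = P X (1 − P) + (1 − P) X P` onto the tangent space. -/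
def piT {n : ℕ} (P X : Mat n) : Mat n := P * X * (1 - P) + (1 - P) * X * P

/-- The operator `Ω_* X = −[P, [H, X]]`. -/
def OmegaOp {n : ℕ} (P H X : Mat n) : Mat n :=
  -(P * (H * X - X * H) - (H * X - X * H) * P)

namespace FirstOrderOptAux

open NormedSpace

/-- sup norm is bounded by the `L∞`-operator norm (expressed concretely). -/
lemma aux_norm_le {n : ℕ} (A : Mat n) :
    ‖A‖ ≤ (((Finset.univ : Finset (Fin n)).sup fun i => ∑ j, ‖A i j‖₊ : NNReal) : ℝ) := by
  rw [Matrix.norm_le_iff (by positivity)]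
  intro i j
  have h1 : ‖A i j‖₊ ≤ ∑ j', ‖A i j'‖₊ :=
    Finset.single_le_sum (f := fun j' => ‖A i j'‖₊) (fun _ _ => zero_le) (Finset.mem_univ j)
  have h2 : (∑ j', ‖A i j'‖₊) ≤ (Finset.univ : Finset (Fin n)).sup fun i => ∑ j, ‖A i j‖₊ :=
    Finset.le_sup (f := fun i => ∑ j, ‖A i j‖₊) (Finset.mem_univ i)
  calc ‖A i j‖ = ((‖A i j‖₊ : NNReal) : ℝ) := rfl
    _ ≤ _ := by exact_mod_cast h1.trans h2

/-- Transfer a derivative from the `L∞`-operator-norm structure to the sup-norm structure. -/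
lemma aux_bridge {n : ℕ} {f : ℝ → Mat n} {L : Mat n} {x : ℝ}
    (h : letI : NormedAddCommGroup (Mat n) := Matrix.linftyOpNormedAddCommGroup
      letI : NormedSpace ℝ (Mat n) := Matrix.linftyOpNormedSpace
      HasDerivAt f L x) : HasDerivAt f L x := by
  exact h

lemma aux_curve_deriv {n : ℕ} (Ω P : Mat n) :
    HasDerivAt (fun t : ℝ => exp (t • Ω) * P * exp (t • (-Ω)))
      (Ω * P - P * Ω) 0 := by
  apply aux_bridge
  letI : NormedRing (Mat n) := Matrix.linftyOpNormedRing
  letI : NormedAlgebra ℝ (Mat n) := Matrix.linftyOpNormedAlgebra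
  haveI : CompleteSpace (Mat n) :=
    @FiniteDimensional.complete ℝ (Mat n) _ _ _ PseudoMetricSpace.toUniformSpace _ _ _ _ _
  have hf := @hasDerivAt_exp_smul_const ℝ (Mat n) _ _ _ this Ω 0
  simp only [zero_smul, exp_zero, one_mul] at hf
  have hg := @hasDerivAt_exp_smul_const ℝ (Mat n) _ _ _ this (-Ω) 0
  simp only [zero_smul, exp_zero, one_mul] at hg
  have h := (hf.mul_const P).mul hg
  simp only [zero_smul, exp_zero, one_mul, mul_one] at h
  rw [show Ω * P - P * Ω = Ω * P + P * -Ω by simp [mul_neg, sub_eq_add_neg]]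
  exact h

lemma aux_exp_mul_inv {n : ℕ} (Ω : Mat n) (t : ℝ) :
    exp (t • Ω) * exp (t • (-Ω)) = 1 := by
  have hc : Commute (t • Ω) (t • (-Ω)) := by
    rw [smul_neg]; exact (Commute.refl _).neg_right
  rw [← Matrix.exp_add_of_commute _ _ hc, smul_neg, add_neg_cancel, exp_zero]

lemma aux_exp_transpose {n : ℕ} (A : Mat n) (t : ℝ) :
    (exp (t • A))ᵀ = exp (t • Aᵀ) := by
  rw [← Matrix.exp_transpose, Matrix.transpose_smul]

end FirstOrderOptAux

open FirstOrderOptAux NormedSpace in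
/-- first-order optimality condition. If `P*` is a local minimizer of a
continuously differentiable energy `E` over `𝓜_N`, and `H* = ∇E(P*)` (the gradient
with respect to the Frobenius inner product on symmetric matrices), then
`P*H*(1−P*) = (1−P*)H*P* = 0`, equivalently `[H*, P*] = 0`. -/

theorem first_order_optimality {Nb N : ℕ} (E : Mat Nb → ℝ) (hE : ContDiff ℝ 1 E)
    (Pstar Hstar : Mat Nb)
    (hPmem : Pstar ∈ projSet Nb N)
    (hmin : IsLocalMinOn E (projSet Nb N) Pstar)
    (hHsym : Hstar.IsSymm)
    (hgrad : ∀ X : Mat Nb, X.IsSymm → fderiv ℝ E Pstar X = (Hstar * X).trace) :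
    Pstar * Hstar * (1 - Pstar) = 0 ∧ (1 - Pstar) * Hstar * Pstar = 0 ∧
      Hstar * Pstar - Pstar * Hstar = 0 := by
  obtain ⟨hPsymm, hPidem, hPtr⟩ := hPmem
  have hPs : Pstarᵀ = Pstar := hPsymm
  have hHs : Hstarᵀ = Hstar := hHsym
  set B := Pstar * Hstar * (1 - Pstar) with hB
  have h1P : (1 - Pstar) * Pstar = 0 := by rw [sub_mul, one_mul, hPidem, sub_self]
  have hP1 : Pstar * (1 - Pstar) = 0 := by rw [mul_sub, mul_one, hPidem, sub_self]
  have hBP : B * Pstar = 0 := by rw [hB, mul_assoc, h1P, mul_zero]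
  have hPB : Pstar * B = B := by rw [hB, ← mul_assoc, ← mul_assoc, hPidem]
  have hBt : Bᵀ = (1 - Pstar) * Hstar * Pstar := by
    rw [hB]
    simp [Matrix.transpose_mul, hPs, hHs, Matrix.mul_assoc]
  have hBtP : Bᵀ * Pstar = Bᵀ := by rw [hBt, mul_assoc, hPidem]
  have hPBt : Pstar * Bᵀ = 0 := by
    rw [hBt, ← mul_assoc, ← mul_assoc, hP1, zero_mul, zero_mul]
  have h1Bt : (1 - Pstar) * Bᵀ = Bᵀ := by rw [sub_mul, one_mul, hPBt, sub_zero]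
  set Ω := B - Bᵀ with hΩ
  have hΩt : Ωᵀ = -Ω := by
    rw [hΩ, Matrix.transpose_sub, Matrix.transpose_transpose, neg_sub]
  set γ : ℝ → Mat Nb := fun t => exp (t • Ω) * Pstar * exp (t • (-Ω)) with hγdef
  have hγ0 : γ 0 = Pstar := by simp [hγdef, exp_zero]
  have hmem : ∀ t : ℝ, γ t ∈ projSet Nb N := by
    intro t
    have h1 := aux_exp_mul_inv Ω t
    have h2 : exp (t • (-Ω)) * exp (t • Ω) = 1 := by
      have := aux_exp_mul_inv (-Ω) t
      rwa [neg_neg] at this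
    have hMt : (exp (t • Ω))ᵀ = exp (t • (-Ω)) := by
      rw [aux_exp_transpose, hΩt]
    have hNt : (exp (t • (-Ω)))ᵀ = exp (t • Ω) := by
      rw [aux_exp_transpose]
      rw [show (-Ω)ᵀ = Ω by rw [Matrix.transpose_neg, hΩt, neg_neg]]
    refine ⟨?_, ?_, ?_⟩
    · show (γ t)ᵀ = γ t
      simp only [hγdef, Matrix.transpose_mul, hPs, hMt, hNt, Matrix.mul_assoc]
    · show γ t * γ t = γ t
      simp only [hγdef, mul_assoc]
      rw [← mul_assoc (exp (t • (-Ω))) (exp (t • Ω)), h2, one_mul,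
        ← mul_assoc Pstar Pstar, hPidem]
    · show (γ t).trace = (N : ℝ)
      rw [hγdef]
      rw [Matrix.trace_mul_cycle, h2, one_mul, hPtr]
  have hD : Ω * Pstar - Pstar * Ω = -(B + Bᵀ) := by
    rw [hΩ, sub_mul, mul_sub, hBP, hBtP, hPB, hPBt]
    abel
  have hderiv : HasDerivAt γ (-(B + Bᵀ)) 0 := hD ▸ aux_curve_deriv Ω Pstar
  have hEd : HasFDerivAt E (fderiv ℝ E Pstar) (γ 0) := by
    rw [hγ0]
    exact (hE.differentiable one_ne_zero Pstar).hasFDerivAt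
  have hEγ : HasDerivAt (fun t => E (γ t)) (fderiv ℝ E Pstar (-(B + Bᵀ))) 0 :=
    hEd.comp_hasDerivAt 0 hderiv
  have htend : Tendsto γ (𝓝 0) (𝓝[projSet Nb N] Pstar) := by
    refine tendsto_nhdsWithin_of_tendsto_nhds_of_eventually_within _ ?_
      (Eventually.of_forall hmem)
    have := hderiv.continuousAt.tendsto
    rwa [hγ0] at this
  have hloc : IsLocalMin (fun t => E (γ t)) 0 := by
    have h := htend.eventually hmin
    filter_upwards [h] with t ht
    simpa [hγ0] using ht
  have hfd0 : fderiv ℝ E Pstar (-(B + Bᵀ)) = 0 := hloc.hasDerivAt_eq_zero hEγ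
  have hXs : (-(B + Bᵀ)).IsSymm := by
    show (-(B + Bᵀ))ᵀ = -(B + Bᵀ)
    rw [Matrix.transpose_neg, Matrix.transpose_add, Matrix.transpose_transpose, add_comm]
  have h0 : (Hstar * -(B + Bᵀ)).trace = 0 := by rw [← hgrad _ hXs]; exact hfd0
  have e1 : Bᵀ * B = (1 - Pstar) * (Hstar * B) := by rw [hBt, mul_assoc, hPB, mul_assoc]
  have hPHB : (Pstar * (Hstar * B)).trace = 0 := by
    rw [← mul_assoc, Matrix.trace_mul_comm, ← mul_assoc, hBP, zero_mul, Matrix.trace_zero]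
  have hHB : (Hstar * B).trace = (Bᵀ * B).trace := by
    rw [e1, sub_mul, one_mul, Matrix.trace_sub, hPHB, sub_zero]
  have e2 : B * Bᵀ = Pstar * (Hstar * Bᵀ) := by rw [hB, mul_assoc, h1Bt, mul_assoc]
  have hHBt : (Hstar * Bᵀ).trace = (Bᵀ * B).trace := by
    have hbb : (B * Bᵀ).trace = (Hstar * Bᵀ).trace := by
      rw [e2, Matrix.trace_mul_comm, mul_assoc, hBtP]
    rw [← hbb, Matrix.trace_mul_comm]
  have hBtB : (Bᵀ * B).trace = 0 := by
    have : -((Hstar * B).trace + (Hstar * Bᵀ).trace) = 0 := by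
      rw [← Matrix.trace_add, ← Matrix.trace_neg, ← Matrix.mul_add, ← Matrix.mul_neg]
      exact h0
    rw [hHB, hHBt] at this
    linarith
  have htr : (Bᵀ * B).trace = ∑ j, ∑ i, (B i j) ^ 2 := by
    simp [Matrix.trace, Matrix.mul_apply, Matrix.diag, sq, Matrix.transpose_apply]
  have hB0 : B = 0 := by
    ext i j
    have hsum : ∑ j, ∑ i, (B i j) ^ 2 = 0 := by rw [← htr]; exact hBtB
    have hcol := (Finset.sum_eq_zero_iff_of_nonneg
      (fun j _ => Finset.sum_nonneg fun i _ => sq_nonneg (B i j))).mp hsum j (Finset.mem_univ j)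
    have hentry := (Finset.sum_eq_zero_iff_of_nonneg
      (fun i _ => sq_nonneg (B i j))).mp hcol i (Finset.mem_univ i)
    have := pow_eq_zero_iff (n := 2) (by norm_num) |>.mp hentry
    simpa using this
  have hBt0 : (1 - Pstar) * Hstar * Pstar = 0 := by rw [← hBt, hB0, Matrix.transpose_zero]
  refine ⟨hB0, hBt0, ?_⟩
  have key : Hstar * Pstar - Pstar * Hstar = Bᵀ - B := by
    rw [hB, hBt]
    noncomm_ring
  rw [key, hB0]
  simp
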